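/- Inductive soundness and completeness of the productivity transformation: for every logic program P, ground atom A ∈ B_P, and n ∈ ℕ, A ∈ T_P ↑ n if and only if there exists a ground proof term π such that the atom A augmented with extra argument π belongs to T_{P^} ↑ n, where P^ is the productivity transformation of P. -/

import Mathlib

structure GroundClause (α : Type*) where
  head : α
  body : List α

def Tp {α : Type*} (P : Set (GroundClause α)) (S : Set α) : Set α :=
  {a | ∃ c ∈ P, c.head = a ∧ ∀ b ∈ c.body, b ∈ S}

/-- Ground proof terms over clause names `ι`: `node i [π₁,…,πₘ]` is the ground
instance `κ_i(π₁,…,πₘ)` of the extra head argument of the `i`-th clause. -/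
inductive PTm (ι : Type*) : Type _
  | node : ι → List (PTm ι) → PTm ι

/-- A logic program as an indexed family: `P i` is the set of ground instances
of the `i`-th clause of `P`. -/
def transf {α ι : Type*} (P : ι → Set (GroundClause α)) :
    Set (GroundClause (α × PTm ι)) :=
  {d | ∃ (i : ι) (c : GroundClause α) (πs : List (PTm ι)),
        c ∈ P i ∧ πs.length = c.body.length ∧
        d.head = (c.head, PTm.node i πs) ∧ d.body = c.body.zip πs}

private lemma exists_zip_list {α β : Type*} {Q : α → β → Prop} :
    ∀ (l : List α), (∀ b ∈ l, ∃ p, Q b p) →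
      ∃ ps : List β, ps.length = l.length ∧ ∀ x ∈ l.zip ps, Q x.1 x.2 := by
  intro l
  induction l with
  | nil => intro _; exact ⟨[], rfl, by simp⟩
  | cons a t ih =>
    intro h
    obtain ⟨p, hp⟩ := h a (List.mem_cons_self (a := a) (l := t))
    obtain ⟨ps, hlen, hps⟩ := ih (fun b hb => h b (List.mem_cons_of_mem _ hb))
    refine ⟨p :: ps, by simp [hlen], ?_⟩
    intro x hx
    rcases List.mem_cons.1 hx with h1 | h2
    · subst h1; exact hp
    · exact hps x h2

private lemma mem_of_zip {α β : Type*} :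
    ∀ (l : List α) (ps : List β), ps.length = l.length →
      ∀ b ∈ l, ∃ p, (b, p) ∈ l.zip ps := by
  intro l
  induction l with
  | nil => simp
  | cons a t ih =>
    intro ps hlen b hb
    cases ps with
    | nil => simp at hlen
    | cons p pt =>
      rcases List.mem_cons.1 hb with h1 | h2
      · subst h1; exact ⟨p, List.mem_cons_self⟩
      · obtain ⟨q, hq⟩ := ih pt (by simpa using hlen) b h2
        exact ⟨q, List.mem_cons_of_mem _ hq⟩

/-- inductive soundness and completeness of the productivity
transformation: for every ground atom `A` and `n`, `A ∈ T_P ↑ n` iff there is a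
ground proof term `π` with `(A, π) ∈ T_{P^} ↑ n`. -/
theorem transf_iterate_up_iff {α ι : Type*} (P : ι → Set (GroundClause α))
    (A : α) (n : ℕ) :
    A ∈ (Tp (⋃ i, P i))^[n] ∅ ↔ ∃ π : PTm ι, (A, π) ∈ (Tp (transf P))^[n] ∅ := by
  induction n generalizing A with
  | zero => simp
  | succ n ih =>
    rw [Function.iterate_succ_apply', Function.iterate_succ_apply']
    constructor
    · rintro ⟨c, hc, rfl, hbody⟩
      obtain ⟨S, ⟨i, rfl⟩, hci⟩ := hc
      obtain ⟨πs, hlen, hπs⟩ := exists_zip_list c.body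
        (fun b hb => (ih b).1 (hbody b hb))
      refine ⟨PTm.node i πs, ⟨(c.head, PTm.node i πs), c.body.zip πs⟩,
        ⟨i, c, πs, hci, hlen, rfl, rfl⟩, rfl, ?_⟩
      intro x hx
      exact hπs x hx
    · rintro ⟨π, d, ⟨i, c, πs, hci, hlen, hhead, hbody⟩, hdA, hmem⟩
      have hA : c.head = A := by
        have := hhead ▸ hdA
        exact (Prod.mk.injEq _ _ _ _ ▸ this).1
      refine ⟨c, Set.mem_iUnion.2 ⟨i, hci⟩, hA, ?_⟩
      intro b hb
      obtain ⟨p, hp⟩ := mem_of_zip c.body πs hlen b hb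
      exact (ih b).2 ⟨p, hmem (b, p) (hbody ▸ hp)⟩
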